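/- Let H, H¹ be right-continuous increasing functions on [0,∞) with H(u⁻) < 1 for u ≤ t, H¹ absolutely continuous with respect to Lebesgue measure with H^{1\prime}(u)(1−H(u⁻))^{−2} integrable, and let H_n, H_n^1 be step functions (empirical subdistribution functions) converging uniformly to H, H¹ on [0,t]. Then ∫₀ᵗ (1 − H_n(u⁻))^{−1} dH_n^1(u) → ∫₀ᵗ (1 − H(u⁻))^{−1} dH¹(u) as n → ∞. -/

import Mathlib

open MeasureTheory Filter Function Topology
open scoped ENNReal

open Set in
/-- If two monotone functions are `δ`-close on `[0, u)`, their left limits at `u > 0`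
are `δ`-close. -/
lemma NA_abs_leftLim_sub_le {f g : ℝ → ℝ} (hf : Monotone f) (hg : Monotone g)
    {u δ : ℝ} (h0 : 0 < u) (hδ : ∀ v ∈ Set.Ico (0 : ℝ) u, |f v - g v| ≤ δ) :
    |leftLim f u - leftLim g u| ≤ δ := by
  have h1 : Tendsto f (𝓝[<] u) (𝓝 (leftLim f u)) := hf.tendsto_leftLim u
  have h2 : Tendsto g (𝓝[<] u) (𝓝 (leftLim g u)) := hg.tendsto_leftLim u
  have h3 : Tendsto (fun v => |f v - g v|) (𝓝[<] u)
      (𝓝 |leftLim f u - leftLim g u|) := (h1.sub h2).abs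
  refine le_of_tendsto h3 ?_
  filter_upwards [Ioo_mem_nhdsLT_of_mem (show u ∈ Set.Ioc 0 u from ⟨h0, le_rfl⟩)]
    with v hv
  exact hδ v ⟨hv.1.le, hv.2⟩

/-- Bounded measurable functions are integrable on sets of finite measure. -/
lemma NA_integrableOn_of_bounded {g : ℝ → ℝ} (hmeas : Measurable g)
    (μ : Measure ℝ) {s : Set ℝ} (hsm : MeasurableSet s) (hfin : μ s ≠ ⊤)
    {C : ℝ} (hC : ∀ x ∈ s, |g x| ≤ C) : IntegrableOn g s μ := by
  haveI : IsFiniteMeasure (μ.restrict s) :=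
    ⟨by rw [Measure.restrict_apply_univ]; exact lt_top_iff_ne_top.2 hfin⟩
  refine Integrable.mono' (integrable_const C)
    hmeas.aestronglyMeasurable ?_
  filter_upwards [ae_restrict_mem hsm] with x hx
  simpa [Real.norm_eq_abs] using hC x hx

open Set in
/-- Fubini representation: integrating the left limit of a Stieltjes function `F`
against a Stieltjes measure `G` over `(0, t]`. -/
lemma NA_repr (F G : StieltjesFunction ℝ) {t : ℝ} (ht : 0 < t) :
    ∫ u in Set.Ioc (0 : ℝ) t, leftLim (⇑F) u ∂G.measure
      = F 0 * (G t - G 0) + ∫ v in Set.Ioc (0 : ℝ) t, (G t - G v) ∂F.measure := by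
  have hFfin : ∀ u : ℝ, F.measure (Ioo 0 u) ≠ ⊤ := fun u => by
    rw [F.measure_Ioo]; exact ENNReal.ofReal_ne_top
  have hGfin : G.measure (Ioc 0 t) ≠ ⊤ := by
    rw [G.measure_Ioc]; exact ENNReal.ofReal_ne_top
  have hφmeas : Measurable fun u : ℝ => F.measure (Ioo 0 u) := by
    have : (fun u : ℝ => F.measure (Ioo 0 u))
        = fun u => ENNReal.ofReal (leftLim (⇑F) u - F 0) := by
      funext u; rw [F.measure_Ioo]
    rw [this]
    exact ENNReal.measurable_ofReal.comp
      (Monotone.measurable fun a b hab => sub_le_sub_right (F.mono.leftLim hab) _)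
  -- step 1 : rewrite the integrand using `F.measure (Ioo 0 u)`
  have hstep1 : ∫ u in Ioc (0 : ℝ) t, leftLim (⇑F) u ∂G.measure
      = ∫ u in Ioc (0 : ℝ) t, (F 0 + (F.measure (Ioo 0 u)).toReal) ∂G.measure := by
    refine setIntegral_congr_fun measurableSet_Ioc fun u hu => ?_
    rw [F.measure_Ioo, ENNReal.toReal_ofReal (sub_nonneg.2 (F.mono.le_leftLim hu.1))]
    ring
  have hint2 : IntegrableOn (fun u => (F.measure (Ioo 0 u)).toReal)
      (Ioc (0 : ℝ) t) G.measure := by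
    refine NA_integrableOn_of_bounded hφmeas.ennreal_toReal _ measurableSet_Ioc hGfin
      (C := (F.measure (Ioo 0 t)).toReal) fun u hu => ?_
    rw [abs_of_nonneg ENNReal.toReal_nonneg]
    exact ENNReal.toReal_mono (hFfin t) (measure_mono (Ioo_subset_Ioo_right hu.2))
  have hsplit : ∫ u in Ioc (0 : ℝ) t, (F 0 + (F.measure (Ioo 0 u)).toReal) ∂G.measure
      = F 0 * (G t - G 0)
        + ∫ u in Ioc (0 : ℝ) t, (F.measure (Ioo 0 u)).toReal ∂G.measure := by
    rw [integral_add (integrableOn_const (C := F 0) hGfin) hint2]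
    congr 1
    rw [setIntegral_const, measureReal_def, G.measure_Ioc,
      ENNReal.toReal_ofReal (sub_nonneg.2 (G.mono ht.le)), smul_eq_mul, mul_comm]
  have htoReal : ∫ u in Ioc (0 : ℝ) t, (F.measure (Ioo 0 u)).toReal ∂G.measure
      = (∫⁻ u in Ioc (0 : ℝ) t, F.measure (Ioo 0 u) ∂G.measure).toReal := by
    rw [integral_toReal hφmeas.aemeasurable
      (Eventually.of_forall fun u => lt_top_iff_ne_top.2 (hFfin u))]
  -- Fubini
  set μ := G.measure.restrict (Ioc (0 : ℝ) t) with hμ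
  have hk : ∀ u v : ℝ, (Ioo (0 : ℝ) u).indicator (fun _ => (1 : ℝ≥0∞)) v
      = {p : ℝ × ℝ | 0 < p.2 ∧ p.2 < p.1}.indicator (fun _ => (1 : ℝ≥0∞)) (u, v) := by
    intro u v; by_cases h : v ∈ Ioo (0 : ℝ) u
    · rw [Set.indicator_of_mem h, Set.indicator_of_mem]
      exact ⟨h.1, h.2⟩
    · rw [Set.indicator_of_notMem h, Set.indicator_of_notMem]
      simpa [Set.mem_setOf_eq, Set.mem_Ioo] using h
  have hSm : MeasurableSet {p : ℝ × ℝ | 0 < p.2 ∧ p.2 < p.1} :=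
    (measurableSet_lt measurable_const measurable_snd).inter
      (measurableSet_lt measurable_snd measurable_fst)
  have hfub : ∫⁻ u, F.measure (Ioo 0 u) ∂μ
      = ∫⁻ v, (Ioi (0 : ℝ)).indicator (fun v => μ (Ioi v)) v ∂F.measure := by
    have h1 : ∀ u : ℝ, F.measure (Ioo 0 u)
        = ∫⁻ v, (Ioo (0 : ℝ) u).indicator (fun _ => (1 : ℝ≥0∞)) v ∂F.measure := by
      intro u; rw [lintegral_indicator_const measurableSet_Ioo, one_mul]
    calc ∫⁻ u, F.measure (Ioo 0 u) ∂μ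
        = ∫⁻ u, ∫⁻ v, (Ioo (0 : ℝ) u).indicator (fun _ => (1 : ℝ≥0∞)) v ∂F.measure ∂μ := by
          exact lintegral_congr fun u => h1 u
      _ = ∫⁻ v, ∫⁻ u, (Ioo (0 : ℝ) u).indicator (fun _ => (1 : ℝ≥0∞)) v ∂μ ∂F.measure := by
          refine lintegral_lintegral_swap (Measurable.aemeasurable ?_)
          have huncurry : uncurry (fun u v => (Ioo (0 : ℝ) u).indicator (fun _ => (1 : ℝ≥0∞)) v)
              = {p : ℝ × ℝ | 0 < p.2 ∧ p.2 < p.1}.indicator (fun _ => (1 : ℝ≥0∞)) := by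
            funext p; exact hk p.1 p.2
          rw [huncurry]; exact measurable_const.indicator hSm
      _ = ∫⁻ v, (Ioi (0 : ℝ)).indicator (fun v => μ (Ioi v)) v ∂F.measure := by
          refine lintegral_congr fun v => ?_
          by_cases hv : 0 < v
          · have heq : (fun u => (Ioo (0 : ℝ) u).indicator (fun _ => (1 : ℝ≥0∞)) v)
                = (Ioi v).indicator fun _ => (1 : ℝ≥0∞) := by
              funext u; by_cases h : v < u
              · rw [Set.indicator_of_mem (Set.mem_Ioo.2 ⟨hv, h⟩),
                  Set.indicator_of_mem (Set.mem_Ioi.2 h)]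
              · rw [Set.indicator_of_notMem fun hm => h (Set.mem_Ioo.1 hm).2,
                  Set.indicator_of_notMem fun hm => h (Set.mem_Ioi.1 hm)]
            rw [heq, lintegral_indicator_const measurableSet_Ioi, one_mul,
              Set.indicator_of_mem (Set.mem_Ioi.2 hv)]
          · have heq : (fun u => (Ioo (0 : ℝ) u).indicator (fun _ => (1 : ℝ≥0∞)) v)
                = fun _ => 0 := by
              funext u
              exact Set.indicator_of_notMem (fun hm => hv (Set.mem_Ioo.1 hm).1) _
            rw [heq, lintegral_zero,
              Set.indicator_of_notMem fun hm => hv (Set.mem_Ioi.1 hm)]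
  have hright : ∫⁻ v, (Ioi (0 : ℝ)).indicator (fun v => μ (Ioi v)) v ∂F.measure
      = ∫⁻ v in Ioc (0 : ℝ) t, ENNReal.ofReal (G t - G v) ∂F.measure := by
    rw [lintegral_indicator measurableSet_Ioi, ← Ioc_union_Ioi_eq_Ioi ht.le,
      lintegral_union measurableSet_Ioi (Ioc_disjoint_Ioi le_rfl)]
    have hB : ∫⁻ v in Ioi t, μ (Ioi v) ∂F.measure = 0 := by
      have hzero : ∀ v ∈ Ioi t, μ (Ioi v) = (0 : ℝ≥0∞) := by
        intro v hv
        rw [hμ, Measure.restrict_apply measurableSet_Ioi]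
        have : Ioi v ∩ Ioc 0 t = ∅ := by
          ext u
          simp only [Set.mem_inter_iff, Set.mem_Ioi, Set.mem_Ioc, Set.mem_empty_iff_false,
            iff_false, not_and, and_imp]
          intro h1 _ ; linarith [Set.mem_Ioi.1 hv]
        rw [this, measure_empty]
      calc ∫⁻ v in Ioi t, μ (Ioi v) ∂F.measure
          = ∫⁻ v in Ioi t, (0 : ℝ≥0∞) ∂F.measure :=
            setLIntegral_congr_fun measurableSet_Ioi hzero
        _ = 0 := lintegral_zero
    have hA : ∫⁻ v in Ioc (0 : ℝ) t, μ (Ioi v) ∂F.measure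
        = ∫⁻ v in Ioc (0 : ℝ) t, ENNReal.ofReal (G t - G v) ∂F.measure := by
      refine setLIntegral_congr_fun measurableSet_Ioc (fun v hv => ?_)
      rw [hμ, Measure.restrict_apply measurableSet_Ioi]
      have : Ioi v ∩ Ioc 0 t = Ioc v t := by
        ext u
        simp only [Set.mem_inter_iff, Set.mem_Ioi, Set.mem_Ioc]
        constructor
        · rintro ⟨h1, _, h3⟩; exact ⟨h1, h3⟩
        · rintro ⟨h1, h2⟩; exact ⟨h1, lt_trans hv.1 h1, h2⟩
      rw [this, G.measure_Ioc]
    rw [hA, hB, add_zero]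
  have hlast : ∫ v in Ioc (0 : ℝ) t, (G t - G v) ∂F.measure
      = (∫⁻ v in Ioc (0 : ℝ) t, ENNReal.ofReal (G t - G v) ∂F.measure).toReal := by
    rw [integral_eq_lintegral_of_nonneg_ae]
    · filter_upwards [ae_restrict_mem measurableSet_Ioc] with v hv
      exact sub_nonneg.2 (G.mono hv.2)
    · exact (measurable_const.sub G.mono.measurable).aestronglyMeasurable
  rw [hstep1, hsplit, htoReal, hfub, hright, ← hlast]

/-- Consistency of the Nelson-Aalen estimator: if the empirical (sub)distribution
functions Hₙ, Hₙ¹ converge uniformly on [0,t] to H, H¹, with H(u⁻) < 1 on [0,t],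
H¹ absolutely continuous and (1 − H(u⁻))⁻² integrable with respect to dH¹, then
∫₀ᵗ (1 − Hₙ(u⁻))⁻¹ dHₙ¹(u) → ∫₀ᵗ (1 − H(u⁻))⁻¹ dH¹(u). -/
theorem nelson_aalen_consistency
    (t : ℝ) (ht : 0 < t)
    (H H1 : StieltjesFunction ℝ) (Hn Hn1 : ℕ → StieltjesFunction ℝ)
    (hHlt : ∀ u ∈ Set.Icc (0 : ℝ) t, leftLim (⇑H) u < 1)
    (hac : H1.measure ≪ (volume : Measure ℝ))
    (hint : IntegrableOn (fun u => ((1 - leftLim (⇑H) u)⁻¹) ^ 2)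
      (Set.Icc (0 : ℝ) t) H1.measure)
    (hconv : TendstoUniformlyOn (fun n => ⇑(Hn n)) (⇑H) atTop (Set.Icc (0 : ℝ) t))
    (hconv1 : TendstoUniformlyOn (fun n => ⇑(Hn1 n)) (⇑H1) atTop
      (Set.Icc (0 : ℝ) t)) :
    Tendsto
      (fun n => ∫ u in Set.Ioc (0 : ℝ) t,
        (1 - leftLim (⇑(Hn n)) u)⁻¹ ∂(Hn1 n).measure)
      atTop
      (𝓝 (∫ u in Set.Ioc (0 : ℝ) t, (1 - leftLim (⇑H) u)⁻¹ ∂H1.measure)) := by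
  classical
  set c := leftLim (⇑H) t with hcdef
  have hc : c < 1 := hHlt t ⟨ht.le, le_rfl⟩
  have hb : (0 : ℝ) < 1 - c := by linarith
  have hHle : ∀ u < t, H u ≤ c := fun u hu => H.mono.le_leftLim hu
  -- the auxiliary Stieltjes function F
  have hmono : Monotone (fun u : ℝ => if u < t then (1 - H u)⁻¹ else (1 - c)⁻¹) := by
    intro u v huv
    dsimp only
    by_cases hv : v < t
    · have hu : u < t := lt_of_le_of_lt huv hv
      rw [if_pos hu, if_pos hv]
      have h1 : H v ≤ c := hHle v hv
      have h2 : H u ≤ H v := H.mono huv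
      exact inv_anti₀ (by linarith) (by linarith)
    · by_cases hu : u < t
      · rw [if_pos hu, if_neg hv]
        have h1 : H u ≤ c := hHle u hu
        exact inv_anti₀ hb (by linarith)
      · rw [if_neg hu, if_neg hv]
  have hrc : ∀ x : ℝ, ContinuousWithinAt
      (fun u : ℝ => if u < t then (1 - H u)⁻¹ else (1 - c)⁻¹) (Set.Ici x) x := by
    intro x
    by_cases hx : x < t
    · have hHx : H x ≤ c := hHle x hx
      have hc1 : ContinuousWithinAt (fun u : ℝ => (1 - H u)⁻¹) (Set.Ici x) x := by
        refine ContinuousWithinAt.inv₀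
          (continuousWithinAt_const.sub (H.right_continuous x)) ?_
        exact ne_of_gt (by linarith : (0 : ℝ) < 1 - H x)
      refine hc1.congr_of_eventuallyEq ?_ (by rw [if_pos hx])
      filter_upwards [nhdsWithin_le_nhds (isOpen_Iio.mem_nhds hx)] with y hy
      rw [if_pos (Set.mem_Iio.1 hy)]
    · refine continuousWithinAt_const.congr ?_ (by rw [if_neg hx])
      intro y hy
      rw [if_neg (not_lt.2 (le_trans (not_lt.1 hx) hy))]
  set F : StieltjesFunction ℝ := ⟨_, hmono, hrc⟩ with hF
  have hFval : ∀ u, F u = if u < t then (1 - H u)⁻¹ else (1 - c)⁻¹ := fun u => rfl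
  have hFleft : ∀ u ∈ Set.Ioc (0 : ℝ) t, leftLim (⇑F) u = (1 - leftLim (⇑H) u)⁻¹ := by
    intro u hu
    refine leftLim_eq_of_tendsto ?_
    have h1 : Tendsto (⇑H) (𝓝[<] u) (𝓝 (leftLim (⇑H) u)) := H.mono.tendsto_leftLim u
    have hlt1 : leftLim (⇑H) u < 1 := hHlt u ⟨hu.1.le, hu.2⟩
    have h2 : ContinuousAt (fun x : ℝ => (1 - x)⁻¹) (leftLim (⇑H) u) :=
      ((continuous_const.sub continuous_id).continuousAt).inv₀
        (ne_of_gt (by linarith : (0 : ℝ) < 1 - leftLim (⇑H) u))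
    have h3 : Tendsto (fun v => (1 - H v)⁻¹) (𝓝[<] u)
        (𝓝 ((1 - leftLim (⇑H) u)⁻¹)) := h2.tendsto.comp h1
    refine h3.congr' ?_
    filter_upwards [self_mem_nhdsWithin] with v hv
    rw [hFval, if_pos (lt_of_lt_of_le (Set.mem_Iio.1 hv) hu.2)]
  -- representation of the integrals
  have hreprJ : ∫ u in Set.Ioc (0 : ℝ) t, (1 - leftLim (⇑H) u)⁻¹ ∂H1.measure
      = F 0 * (H1 t - H1 0)
        + ∫ v in Set.Ioc (0 : ℝ) t, (H1 t - H1 v) ∂F.measure := by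
    rw [← NA_repr F H1 ht]
    exact setIntegral_congr_fun measurableSet_Ioc fun u hu => (hFleft u hu).symm
  have hreprJn : ∀ n, ∫ u in Set.Ioc (0 : ℝ) t, (1 - leftLim (⇑H) u)⁻¹ ∂(Hn1 n).measure
      = F 0 * (Hn1 n t - Hn1 n 0)
        + ∫ v in Set.Ioc (0 : ℝ) t, (Hn1 n t - Hn1 n v) ∂F.measure := by
    intro n
    rw [← NA_repr F (Hn1 n) ht]
    exact setIntegral_congr_fun measurableSet_Ioc fun u hu => (hFleft u hu).symm
  have hFfin : F.measure (Set.Ioc 0 t) ≠ ⊤ := by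
    rw [F.measure_Ioc]; exact ENNReal.ofReal_ne_top
  -- integrability of the comparison integrands
  have hintG : ∀ G : StieltjesFunction ℝ,
      IntegrableOn (fun v => G t - G v) (Set.Ioc (0 : ℝ) t) F.measure := by
    intro G
    refine NA_integrableOn_of_bounded (measurable_const.sub G.mono.measurable) _
      measurableSet_Ioc hFfin (C := G t - G 0) fun v hv => ?_
    show |G t - G v| ≤ _
    rw [abs_of_nonneg (sub_nonneg.2 (G.mono hv.2))]
    exact sub_le_sub_left (G.mono hv.1.le) _
  -- convergence of the K-part
  have hK : Tendsto (fun n => ∫ v in Set.Ioc (0 : ℝ) t, (Hn1 n t - Hn1 n v) ∂F.measure)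
      atTop (𝓝 (∫ v in Set.Ioc (0 : ℝ) t, (H1 t - H1 v) ∂F.measure)) := by
    rw [Metric.tendsto_nhds]
    intro ε hε
    set m := (F.measure (Set.Ioc 0 t)).toReal with hm
    have hmnn : 0 ≤ m := ENNReal.toReal_nonneg
    have hδpos : 0 < ε / (2 * m + 1) := div_pos hε (by linarith)
    filter_upwards [Metric.tendstoUniformlyOn_iff.1 hconv1 _ hδpos] with n hn
    set δ := ε / (2 * m + 1) with hδ
    rw [Real.dist_eq, ← integral_sub (hintG (Hn1 n)) (hintG H1)]
    have hbound : ∀ v ∈ Set.Ioc (0 : ℝ) t,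
        ‖(Hn1 n t - Hn1 n v) - (H1 t - H1 v)‖ ≤ 2 * δ := by
      intro v hv
      have h1 := hn t ⟨ht.le, le_rfl⟩
      have h2 := hn v ⟨hv.1.le, hv.2⟩
      rw [Real.dist_eq] at h1 h2
      rw [Real.norm_eq_abs]
      have e1 : (Hn1 n t - Hn1 n v) - (H1 t - H1 v)
          = (Hn1 n t - H1 t) - (Hn1 n v - H1 v) := by ring
      rw [e1]
      have := abs_sub (Hn1 n t - H1 t) (Hn1 n v - H1 v)
      have hx1 : |Hn1 n t - H1 t| ≤ δ := by rw [abs_sub_comm]; exact h1.le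
      have hx2 : |Hn1 n v - H1 v| ≤ δ := by rw [abs_sub_comm]; exact h2.le
      calc |(Hn1 n t - H1 t) - (Hn1 n v - H1 v)|
          ≤ |Hn1 n t - H1 t| + |Hn1 n v - H1 v| := abs_sub _ _
        _ ≤ 2 * δ := by linarith
    have hnorm := norm_setIntegral_le_of_norm_le_const (μ := F.measure)
      (lt_top_iff_ne_top.2 hFfin) hbound
    rw [Real.norm_eq_abs] at hnorm
    refine lt_of_le_of_lt hnorm ?_
    rw [measureReal_def, ← hm]
    calc 2 * δ * m ≤ δ * (2 * m + 1) - δ := by nlinarith [hδpos]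
      _ < δ * (2 * m + 1) := by linarith
      _ = ε := by rw [hδ]; field_simp
  -- endpoint convergences
  have htt : Tendsto (fun n => Hn1 n t) atTop (𝓝 (H1 t)) :=
    hconv1.tendsto_at ⟨ht.le, le_rfl⟩
  have ht0 : Tendsto (fun n => Hn1 n 0) atTop (𝓝 (H1 0)) :=
    hconv1.tendsto_at ⟨le_rfl, ht.le⟩
  -- convergence of Jₙ
  have h1 : Tendsto (fun n => ∫ u in Set.Ioc (0 : ℝ) t,
      (1 - leftLim (⇑H) u)⁻¹ ∂(Hn1 n).measure) atTop
      (𝓝 (∫ u in Set.Ioc (0 : ℝ) t, (1 - leftLim (⇑H) u)⁻¹ ∂H1.measure)) := by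
    rw [hreprJ]
    have : Tendsto (fun n => F 0 * (Hn1 n t - Hn1 n 0)
        + ∫ v in Set.Ioc (0 : ℝ) t, (Hn1 n t - Hn1 n v) ∂F.measure) atTop
        (𝓝 (F 0 * (H1 t - H1 0)
          + ∫ v in Set.Ioc (0 : ℝ) t, (H1 t - H1 v) ∂F.measure)) :=
      ((tendsto_const_nhds.mul (htt.sub ht0))).add hK
    exact this.congr fun n => (hreprJn n).symm
  -- convergence of Iₙ - Jₙ to 0
  have h2 : Tendsto (fun n =>
      (∫ u in Set.Ioc (0 : ℝ) t, (1 - leftLim (⇑(Hn n)) u)⁻¹ ∂(Hn1 n).measure)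
      - ∫ u in Set.Ioc (0 : ℝ) t, (1 - leftLim (⇑H) u)⁻¹ ∂(Hn1 n).measure) atTop
      (𝓝 0) := by
    rw [Metric.tendsto_nhds]
    intro ε hε
    set M : ℝ := H1 t - H1 0 + 2 with hM
    have hMpos : 0 < M := by
      have := H1.mono ht.le
      rw [hM]; linarith
    set Cf : ℝ := 2 / ((1 - c) * (1 - c)) with hCf
    have hCfpos : 0 < Cf := by positivity
    set C : ℝ := Cf * M with hC
    have hCpos : 0 < C := mul_pos hCfpos hMpos
    have hδpos : 0 < min ((1 - c) / 2) (ε / (C + 1)) := by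
      apply lt_min (by linarith) (div_pos hε (by linarith))
    set δ := min ((1 - c) / 2) (ε / (C + 1)) with hδ
    filter_upwards [Metric.tendstoUniformlyOn_iff.1 hconv _ hδpos,
      Metric.tendstoUniformlyOn_iff.1 hconv1 1 one_pos] with n hn1 hn2
    -- pointwise bounds
    have hd : ∀ u ∈ Set.Ioc (0 : ℝ) t,
        |leftLim (⇑(Hn n)) u - leftLim (⇑H) u| ≤ δ := by
      intro u hu
      refine NA_abs_leftLim_sub_le (Hn n).mono H.mono hu.1 fun v hv => ?_
      have := hn1 v ⟨hv.1, le_trans hv.2.le hu.2⟩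
      rw [Real.dist_eq, abs_sub_comm] at this
      exact this.le
    have hbu : ∀ u ∈ Set.Ioc (0 : ℝ) t, leftLim (⇑H) u ≤ c :=
      fun u hu => H.mono.leftLim hu.2
    have hau : ∀ u ∈ Set.Ioc (0 : ℝ) t, 1 - leftLim (⇑(Hn n)) u ≥ (1 - c) / 2 := by
      intro u hu
      have h1 := hd u hu
      have h2 := hbu u hu
      have h3 : δ ≤ (1 - c) / 2 := min_le_left _ _
      have := abs_le.1 h1
      linarith [this.2]
    have hfnbound : ∀ u ∈ Set.Ioc (0 : ℝ) t,
        (0 : ℝ) < (1 - leftLim (⇑(Hn n)) u)⁻¹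
          ∧ (1 - leftLim (⇑(Hn n)) u)⁻¹ ≤ 2 / (1 - c) := by
      intro u hu
      have h1 := hau u hu
      constructor
      · exact inv_pos.2 (by linarith)
      · calc (1 - leftLim (⇑(Hn n)) u)⁻¹ ≤ ((1 - c) / 2)⁻¹ :=
              inv_anti₀ (by linarith) (by linarith)
          _ = 2 / (1 - c) := by rw [inv_div]
    have hfbound : ∀ u ∈ Set.Ioc (0 : ℝ) t,
        (0 : ℝ) < (1 - leftLim (⇑H) u)⁻¹
          ∧ (1 - leftLim (⇑H) u)⁻¹ ≤ (1 - c)⁻¹ := by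
      intro u hu
      have h2 := hbu u hu
      exact ⟨inv_pos.2 (by linarith), inv_anti₀ hb (by linarith)⟩
    have hdiff : ∀ u ∈ Set.Ioc (0 : ℝ) t,
        |(1 - leftLim (⇑(Hn n)) u)⁻¹ - (1 - leftLim (⇑H) u)⁻¹| ≤ δ * Cf := by
      intro u hu
      set a := leftLim (⇑(Hn n)) u with ha
      set b2 := leftLim (⇑H) u with hb2
      have h1 : 1 - a ≥ (1 - c) / 2 := hau u hu
      have h2 : b2 ≤ c := hbu u hu
      have hane : (1 - a) ≠ 0 := ne_of_gt (by linarith)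
      have hbne : (1 - b2) ≠ 0 := ne_of_gt (by linarith)
      have heq : (1 - a)⁻¹ - (1 - b2)⁻¹ = (a - b2) * ((1 - a)⁻¹ * (1 - b2)⁻¹) := by
        field_simp
        try ring
      rw [heq, abs_mul, abs_mul]
      have ha1 : |(1 - a)⁻¹| ≤ 2 / (1 - c) := by
        rw [abs_of_pos (hfnbound u hu).1]; exact (hfnbound u hu).2
      have hb1 : |(1 - b2)⁻¹| ≤ (1 - c)⁻¹ := by
        rw [abs_of_pos (hfbound u hu).1]; exact (hfbound u hu).2
      calc |a - b2| * (|(1 - a)⁻¹| * |(1 - b2)⁻¹|)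
          ≤ δ * (2 / (1 - c) * (1 - c)⁻¹) := by
            refine mul_le_mul (hd u hu) ?_ (by positivity) hδpos.le
            exact mul_le_mul ha1 hb1 (abs_nonneg _) (by positivity)
        _ = δ * Cf := by rw [hCf]; field_simp
    -- integrabilities
    have hμnfin : (Hn1 n).measure (Set.Ioc 0 t) ≠ ⊤ := by
      rw [(Hn1 n).measure_Ioc]; exact ENNReal.ofReal_ne_top
    have hintfn : IntegrableOn (fun u => (1 - leftLim (⇑(Hn n)) u)⁻¹)
        (Set.Ioc (0 : ℝ) t) (Hn1 n).measure := by
      refine NA_integrableOn_of_bounded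
        ((measurable_const.sub (Hn n).mono.leftLim.measurable).inv) _
        measurableSet_Ioc hμnfin (C := 2 / (1 - c)) fun u hu => ?_
      show |(1 - leftLim (⇑(Hn n)) u)⁻¹| ≤ _
      rw [abs_of_pos (hfnbound u hu).1]; exact (hfnbound u hu).2
    have hintf : IntegrableOn (fun u => (1 - leftLim (⇑H) u)⁻¹)
        (Set.Ioc (0 : ℝ) t) (Hn1 n).measure := by
      refine NA_integrableOn_of_bounded
        ((measurable_const.sub H.mono.leftLim.measurable).inv) _
        measurableSet_Ioc hμnfin (C := (1 - c)⁻¹) fun u hu => ?_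
      show |(1 - leftLim (⇑H) u)⁻¹| ≤ _
      rw [abs_of_pos (hfbound u hu).1]; exact (hfbound u hu).2
    rw [Real.dist_eq, sub_zero, ← integral_sub hintfn hintf]
    have hnorm := norm_setIntegral_le_of_norm_le_const (μ := (Hn1 n).measure)
      (f := fun u => (1 - leftLim (⇑(Hn n)) u)⁻¹ - (1 - leftLim (⇑H) u)⁻¹)
      (lt_top_iff_ne_top.2 hμnfin)
      (fun u hu => by rw [Real.norm_eq_abs]; exact hdiff u hu)
    rw [Real.norm_eq_abs] at hnorm
    refine lt_of_le_of_lt hnorm ?_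
    -- bound the total mass
    have hmass : ((Hn1 n).measure (Set.Ioc 0 t)).toReal ≤ M := by
      rw [(Hn1 n).measure_Ioc, ENNReal.toReal_ofReal (sub_nonneg.2 ((Hn1 n).mono ht.le))]
      have h1 := hn2 t ⟨ht.le, le_rfl⟩
      have h2 := hn2 0 ⟨le_rfl, ht.le⟩
      rw [Real.dist_eq] at h1 h2
      have e1 := abs_lt.1 h1
      have e2 := abs_lt.1 h2
      rw [hM]; linarith [e1.1, e1.2, e2.1, e2.2]
    have hδC : δ ≤ ε / (C + 1) := min_le_right _ _
    calc δ * Cf * ((Hn1 n).measure (Set.Ioc 0 t)).toReal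
        ≤ δ * Cf * M := by
          refine mul_le_mul_of_nonneg_left hmass (by positivity)
      _ = δ * C := by rw [hC]; ring
      _ ≤ (ε / (C + 1)) * C := mul_le_mul_of_nonneg_right hδC hCpos.le
      _ < (ε / (C + 1)) * (C + 1) := by
          refine mul_lt_mul_of_pos_left (by linarith) (div_pos hε (by linarith))
      _ = ε := by field_simp
  -- assemble
  have := h2.add h1
  rw [zero_add] at this
  refine this.congr fun n => ?_
  ring
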